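/- arXiv:2407.00307 — 3 statements merged into one kernel-verified Lean document; each statement's English description precedes it below -/
import Mathlib

section
/- Let X be a compact set, P(X) the space of Borel probability measures on X, and J: P(X) → ℝ convex with a von Mises derivative at μ* along every direction ν − μ* (ν ∈ P(X)), with influence function h_{μ*}(x) = lim_{t→0+} (1/t)(J(μ* + t(δ_x − μ*)) − J(μ*)). Then μ* is a global minimizer of J over P(X) if and only if h_{μ*}(x) ≥ 0 for all x ∈ X. -/
open MeasureTheory Filter Topology

private lemma mix_prob {Ω : Type*} [MeasurableSpace Ω]
    (μ ν : Measure Ω) [IsProbabilityMeasure μ] [IsProbabilityMeasure ν]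
    {t : ℝ} (ht0 : 0 ≤ t) (ht1 : t ≤ 1) :
    IsProbabilityMeasure (ENNReal.ofReal (1 - t) • μ + ENNReal.ofReal t • ν) := by
  constructor
  simp only [Measure.add_apply, Measure.smul_apply, measure_univ, smul_eq_mul, mul_one]
  rw [← ENNReal.ofReal_add (by linarith) ht0]
  norm_num

/-- Optimality conditions: for a convex `J` on the probability measures with von Mises
derivative at `μstar` with influence function `h`, `μstar` is a global minimizer
iff `h ≥ 0` everywhere. -/
theorem stmt0 {Ω : Type*} [MeasurableSpace Ω] [TopologicalSpace Ω] [CompactSpace Ω]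
    [BorelSpace Ω]
    (J : Measure Ω → ℝ) (μstar : Measure Ω) [IsProbabilityMeasure μstar]
    (h : Ω → ℝ)
    (hconvex : ∀ (μ ν : Measure Ω), IsProbabilityMeasure μ → IsProbabilityMeasure ν →
      ∀ t : ℝ, t ∈ Set.Icc (0:ℝ) 1 →
      J (ENNReal.ofReal (1 - t) • μ + ENNReal.ofReal t • ν) ≤ (1 - t) * J μ + t * J ν)
    (hinfl : ∀ x : Ω, Tendsto (fun t : ℝ =>
        (J (ENNReal.ofReal (1 - t) • μstar + ENNReal.ofReal t • Measure.dirac x) - J μstar) / t)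
      (𝓝[>] (0:ℝ)) (𝓝 (h x)))
    (hvonMises : ∀ ν : Measure Ω, IsProbabilityMeasure ν →
      Tendsto (fun t : ℝ =>
        (J (ENNReal.ofReal (1 - t) • μstar + ENNReal.ofReal t • ν) - J μstar) / t)
      (𝓝[>] (0:ℝ)) (𝓝 ((∫ x, h x ∂ν) - ∫ x, h x ∂μstar))) :
    (∀ ν : Measure Ω, IsProbabilityMeasure ν → J μstar ≤ J ν) ↔ (∀ x : Ω, 0 ≤ h x) := by
  have hIoc : Set.Ioc (0:ℝ) 1 ∈ 𝓝[>] (0:ℝ) :=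
    Ioc_mem_nhdsGT_of_mem (by constructor <;> norm_num)
  -- First: the integral of h against μstar is 0.
  have hC : (∫ x, h x ∂μstar) = 0 := by
    by_cases hint : Integrable h μstar
    · -- get a strongly measurable representative
      obtain ⟨g, hg, hae⟩ := hint.1
      have hnull : μstar {x | ¬ h x = g x} = 0 := by
        simpa [Filter.EventuallyEq, ae_iff] using hae
      obtain ⟨N, hNsub, hNmeas, hN0⟩ := exists_measurable_superset_of_null hnull
      have hNne : N ≠ Set.univ := by
        intro hu
        rw [hu] at hN0
        simp [measure_univ] at hN0
      obtain ⟨x, hx⟩ : ∃ x, x ∉ N := by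
        by_contra hco
        push_neg at hco
        exact hNne (Set.eq_univ_of_forall hco)
      -- h = g a.e. w.r.t. dirac x
      have haed : h =ᵐ[Measure.dirac x] g := by
        rw [Filter.EventuallyEq, ae_iff]
        have : Measure.dirac x {a | ¬ h a = g a} ≤ Measure.dirac x N :=
          measure_mono hNsub
        have hdN : Measure.dirac x N = 0 := by
          rw [Measure.dirac_apply' x hNmeas]
          simp [Set.indicator_of_notMem hx]
        exact le_antisymm (hdN ▸ this) zero_le
      have hgx : g x = h x := by
        by_contra hne
        exact hx (hNsub (by simp [Ne.symm hne]))
      have hdint : (∫ a, h a ∂Measure.dirac x) = h x := by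
        rw [integral_congr_ae haed, integral_dirac' g x hg, hgx]
      have h1 := hinfl x
      have h2 := hvonMises (Measure.dirac x) inferInstance
      have := tendsto_nhds_unique h1 h2
      rw [hdint] at this
      linarith
    · exact integral_undef hint
  constructor
  · -- minimizer → h ≥ 0
    intro hmin x
    refine ge_of_tendsto (hinfl x) ?_
    filter_upwards [hIoc] with t ht
    have hpm := mix_prob μstar (Measure.dirac x) ht.1.le ht.2 (t := t)
    have := hmin _ hpm
    exact div_nonneg (by linarith) ht.1.le
  · -- h ≥ 0 → minimizer
    intro hpos ν hν
    have hL := hvonMises ν hν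
    rw [hC, sub_zero] at hL
    have hub : (∫ x, h x ∂ν) ≤ J ν - J μstar := by
      refine le_of_tendsto hL ?_
      filter_upwards [hIoc] with t ht
      have hcv := hconvex μstar ν inferInstance hν t ⟨ht.1.le, ht.2⟩
      rw [div_le_iff₀ ht.1]
      nlinarith
    have hnn : 0 ≤ ∫ x, h x ∂ν := integral_nonneg hpos
    linarith
end

section
/- Suppose J: P(X) → ℝ is convex and L-smooth with influence function h_μ, and X is compact so that h_μ attains its minimum. Let μ_{k+1} = (1−η_k)μ_k + η_k δ_{x*(μ_k)} with x*(μ_k) ∈ argmin_{x∈X} h_{μ_k}(x) and η_k = 2/(k+2). Then J(μ_k) − J* ≤ 2LR²/(k+2) for all k ≥ 1, where J* = inf_{μ∈P(X)} J(μ) and R = sup{‖μ−ν‖_TV : μ, ν ∈ P(X)} ≤ 2. -/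
open MeasureTheory Filter Topology

/-- Total variation distance `sup_A |μ(A) - ν(A)|` over measurable sets. -/
noncomputable def tvDist {Ω : Type*} [MeasurableSpace Ω] (μ ν : Measure Ω) : ℝ :=
  ⨆ A : {A : Set Ω // MeasurableSet A}, |(μ A.1).toReal - (ν A.1).toReal|

lemma integral_dirac_of_integrable {Ω : Type*} [MeasurableSpace Ω] (f : Ω → ℝ) (a : Ω)
    (hf : Integrable f (Measure.dirac a)) : ∫ x, f x ∂(Measure.dirac a) = f a := by
  obtain ⟨g, hg, hfg⟩ := hf.1
  have h1 : ∫ x, f x ∂(Measure.dirac a) = ∫ x, g x ∂(Measure.dirac a) :=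
    integral_congr_ae hfg
  have h2 : ∫ x, g x ∂(Measure.dirac a) = g a := integral_dirac' g a hg
  have h3 : f a = g a := by
    by_contra hne
    have hmem : a ∈ {x | f x ≠ g x} := hne
    have := Measure.dirac_apply_of_mem (s := {x | f x ≠ g x}) hmem
    have h0 : (Measure.dirac a) {x | f x ≠ g x} = 0 := hfg
    simp [h0] at this
  rw [h1, h2, h3]

lemma tv_term_le_one {Ω : Type*} [MeasurableSpace Ω] {μ ν : Measure Ω}
    (hμ : IsProbabilityMeasure μ) (hν : IsProbabilityMeasure ν)
    (A : {A : Set Ω // MeasurableSet A}) :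
    |(μ A.1).toReal - (ν A.1).toReal| ≤ 1 := by
  have h1 : (μ A.1).toReal ≤ 1 := by
    have := prob_le_one (μ := μ) (s := A.1)
    simpa using ENNReal.toReal_le_of_le_ofReal zero_le_one (by simpa using this)
  have h2 : (ν A.1).toReal ≤ 1 := by
    have := prob_le_one (μ := ν) (s := A.1)
    simpa using ENNReal.toReal_le_of_le_ofReal zero_le_one (by simpa using this)
  have h3 : 0 ≤ (μ A.1).toReal := ENNReal.toReal_nonneg
  have h4 : 0 ≤ (ν A.1).toReal := ENNReal.toReal_nonneg
  rw [abs_le]; constructor <;> linarith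

lemma tvDist_le_one {Ω : Type*} [MeasurableSpace Ω] {μ ν : Measure Ω}
    (hμ : IsProbabilityMeasure μ) (hν : IsProbabilityMeasure ν) : tvDist μ ν ≤ 1 := by
  have : Nonempty {A : Set Ω // MeasurableSet A} := ⟨⟨Set.univ, MeasurableSet.univ⟩⟩
  exact ciSup_le (tv_term_le_one hμ hν)

lemma tvDist_nonneg' {Ω : Type*} [MeasurableSpace Ω] {μ ν : Measure Ω}
    (hμ : IsProbabilityMeasure μ) (hν : IsProbabilityMeasure ν) : 0 ≤ tvDist μ ν :=
  le_ciSup_of_le ⟨1, by rintro x ⟨A, rfl⟩; exact tv_term_le_one hμ hν A⟩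
    ⟨Set.univ, MeasurableSet.univ⟩ (abs_nonneg _)

lemma le_tvDist {Ω : Type*} [MeasurableSpace Ω] {μ ν : Measure Ω}
    (hμ : IsProbabilityMeasure μ) (hν : IsProbabilityMeasure ν)
    (A : {A : Set Ω // MeasurableSet A}) :
    |(μ A.1).toReal - (ν A.1).toReal| ≤ tvDist μ ν :=
  le_ciSup_of_le ⟨1, by rintro x ⟨B, rfl⟩; exact tv_term_le_one hμ hν B⟩ A le_rfl

/-- Deterministic Frank–Wolfe complexity on probability spaces: with the smooth
functional inequality, the convexity gradient inequality, step sizes `η_k = 2/(k+2)` and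
iterates `μ_{k+1} = (1-η_k)μ_k + η_k δ_{x*(μ_k)}` where `x*(μ_k)` minimizes the influence
function `h (μ k)`, we have `J(μ_k) - J* ≤ 2LR²/(k+2)` for all `k ≥ 1`, with
`J* = inf J` over `P(X)` and `R = sup ‖μ-ν‖_TV ≤ 2`. -/
theorem stmt7 {Ω : Type*} [MeasurableSpace Ω] [TopologicalSpace Ω] [CompactSpace Ω]
    [BorelSpace Ω] [Nonempty Ω]
    (J : Measure Ω → ℝ) (h : Measure Ω → Ω → ℝ) (L : ℝ) (hL : 0 < L)
    (hint : ∀ (μ ν : Measure Ω), IsProbabilityMeasure μ → IsProbabilityMeasure ν →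
      Integrable (h μ) ν)
    -- convexity first-order inequality
    (hgrad : ∀ (μ ν : Measure Ω), IsProbabilityMeasure μ → IsProbabilityMeasure ν →
      J μ + ((∫ x, h μ x ∂ν) - ∫ x, h μ x ∂μ) ≤ J ν)
    -- smooth functional inequality (L-smoothness)
    (hsfi : ∀ (μ ν : Measure Ω), IsProbabilityMeasure μ → IsProbabilityMeasure ν →
      J ν ≤ J μ + ((∫ x, h μ x ∂ν) - ∫ x, h μ x ∂μ) + L / 2 * (tvDist μ ν) ^ 2)
    (μseq : ℕ → Measure Ω) (hprob : ∀ k, IsProbabilityMeasure (μseq k))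
    (xstar : ℕ → Ω)
    (hmin : ∀ k, ∀ x : Ω, h (μseq k) (xstar k) ≤ h (μseq k) x)
    (hrec : ∀ k : ℕ, μseq (k + 1) =
      ENNReal.ofReal (1 - 2 / ((k : ℝ) + 2)) • μseq k +
        ENNReal.ofReal (2 / ((k : ℝ) + 2)) • Measure.dirac (xstar k)) :
    (⨆ p : {p : Measure Ω × Measure Ω //
        IsProbabilityMeasure p.1 ∧ IsProbabilityMeasure p.2}, tvDist p.1.1 p.1.2) ≤ 2 ∧
    ∀ k : ℕ, 1 ≤ k →
      J (μseq k) - (⨅ ν : {ν : Measure Ω // IsProbabilityMeasure ν}, J ν.1) ≤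
        2 * L * (⨆ p : {p : Measure Ω × Measure Ω //
            IsProbabilityMeasure p.1 ∧ IsProbabilityMeasure p.2}, tvDist p.1.1 p.1.2) ^ 2 /
          ((k : ℝ) + 2) := by
  classical
  obtain ⟨x0⟩ := (inferInstance : Nonempty Ω)
  haveI : Nonempty {p : Measure Ω × Measure Ω //
      IsProbabilityMeasure p.1 ∧ IsProbabilityMeasure p.2} :=
    ⟨⟨(Measure.dirac x0, Measure.dirac x0), inferInstance, inferInstance⟩⟩
  haveI : Nonempty {ν : Measure Ω // IsProbabilityMeasure ν} :=
    ⟨⟨Measure.dirac x0, inferInstance⟩⟩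
  haveI : Nonempty {A : Set Ω // MeasurableSet A} := ⟨⟨Set.univ, MeasurableSet.univ⟩⟩
  set R : ℝ := (⨆ p : {p : Measure Ω × Measure Ω //
      IsProbabilityMeasure p.1 ∧ IsProbabilityMeasure p.2}, tvDist p.1.1 p.1.2) with hRdef
  set Jstar : ℝ := (⨅ ν : {ν : Measure Ω // IsProbabilityMeasure ν}, J ν.1) with hJdef
  have hRbdd : BddAbove (Set.range fun p : {p : Measure Ω × Measure Ω //
      IsProbabilityMeasure p.1 ∧ IsProbabilityMeasure p.2} => tvDist p.1.1 p.1.2) :=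
    ⟨1, by rintro x ⟨p, rfl⟩; exact tvDist_le_one p.2.1 p.2.2⟩
  have hRle : R ≤ 2 := ciSup_le fun p => (tvDist_le_one p.2.1 p.2.2).trans one_le_two
  have hTVleR : ∀ (μ ν : Measure Ω), IsProbabilityMeasure μ → IsProbabilityMeasure ν →
      tvDist μ ν ≤ R := fun μ ν hμ hν => le_ciSup hRbdd ⟨(μ, ν), hμ, hν⟩
  have hRnn : 0 ≤ R :=
    le_trans (tvDist_nonneg' (μ := Measure.dirac x0) (ν := Measure.dirac x0)
      inferInstance inferInstance) (hTVleR _ _ inferInstance inferInstance)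
  -- minimality gives lower bound on integrals
  have hminint : ∀ k (ν : Measure Ω), IsProbabilityMeasure ν →
      h (μseq k) (xstar k) ≤ ∫ x, h (μseq k) x ∂ν := by
    intro k ν hν
    have := integral_mono (μ := ν) (integrable_const (h (μseq k) (xstar k)))
      (hint _ _ (hprob k) hν) (fun x => hmin k x)
    simpa [integral_const, hν.measure_univ] using this
  -- J* is well-behaved
  have hlow : ∀ ν : {ν : Measure Ω // IsProbabilityMeasure ν},
      J (μseq 0) + (h (μseq 0) (xstar 0) - ∫ x, h (μseq 0) x ∂(μseq 0)) ≤ J ν.1 := by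
    rintro ⟨ν, hν⟩
    have h1 := hminint 0 ν hν
    have h2 := hgrad (μseq 0) ν (hprob 0) hν
    dsimp only
    linarith
  have hJbdd : BddBelow (Set.range fun ν : {ν : Measure Ω // IsProbabilityMeasure ν} =>
      J ν.1) := ⟨_, by rintro x ⟨ν, rfl⟩; exact hlow ν⟩
  have hJstar_le : ∀ k, Jstar ≤ J (μseq k) := fun k => ciInf_le hJbdd ⟨μseq k, hprob k⟩
  -- duality gap bound
  have hgap : ∀ k, h (μseq k) (xstar k) - ∫ x, h (μseq k) x ∂(μseq k) ≤
      Jstar - J (μseq k) := by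
    intro k
    have hle : J (μseq k) + (h (μseq k) (xstar k) - ∫ x, h (μseq k) x ∂(μseq k)) ≤ Jstar := by
      apply le_ciInf
      rintro ⟨ν, hν⟩
      have h1 := hminint k ν hν
      have h2 := hgrad (μseq k) ν (hprob k) hν
      dsimp only
      linarith
    linarith
  -- step size facts
  have hηpos : ∀ k : ℕ, 0 < 2 / ((k : ℝ) + 2) := by
    intro k; positivity
  have hηle : ∀ k : ℕ, 2 / ((k : ℝ) + 2) ≤ 1 := by
    intro k
    rw [div_le_one (by positivity)]
    have : (0 : ℝ) ≤ (k : ℝ) := Nat.cast_nonneg k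
    linarith
  -- integral decomposition along the recursion
  have hdec : ∀ k : ℕ, ∫ x, h (μseq k) x ∂(μseq (k + 1)) =
      (1 - 2 / ((k : ℝ) + 2)) * ∫ x, h (μseq k) x ∂(μseq k) +
        (2 / ((k : ℝ) + 2)) * h (μseq k) (xstar k) := by
    intro k
    have hint1 : Integrable (h (μseq k)) (μseq k) := hint _ _ (hprob k) (hprob k)
    have hintd : Integrable (h (μseq k)) (Measure.dirac (xstar k)) :=
      hint _ _ (hprob k) inferInstance
    rw [hrec k,
      integral_add_measure (hint1.smul_measure ENNReal.ofReal_ne_top)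
        (hintd.smul_measure ENNReal.ofReal_ne_top),
      integral_smul_measure, integral_smul_measure,
      ENNReal.toReal_ofReal (by linarith [hηle k]),
      ENNReal.toReal_ofReal (hηpos k).le,
      integral_dirac_of_integrable _ _ hintd, smul_eq_mul, smul_eq_mul]
  -- TV distance bound along the recursion
  have htv : ∀ k : ℕ, tvDist (μseq k) (μseq (k + 1)) ≤ 2 / ((k : ℝ) + 2) * R := by
    intro k
    apply ciSup_le
    intro A
    set η : ℝ := 2 / ((k : ℝ) + 2) with hη
    have hfin1 : μseq k A.1 ≠ ⊤ := measure_ne_top _ _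
    have hfind : Measure.dirac (xstar k) A.1 ≠ ⊤ := measure_ne_top _ _
    have happly : (μseq (k + 1)) A.1 =
        ENNReal.ofReal (1 - η) * μseq k A.1 +
          ENNReal.ofReal η * Measure.dirac (xstar k) A.1 := by
      rw [hrec k]; simp [Measure.add_apply, smul_eq_mul, hη]
    have htoReal : ((μseq (k + 1)) A.1).toReal =
        (1 - η) * (μseq k A.1).toReal + η * (Measure.dirac (xstar k) A.1).toReal := by
      rw [happly, ENNReal.toReal_add (ENNReal.mul_ne_top ENNReal.ofReal_ne_top hfin1)
        (ENNReal.mul_ne_top ENNReal.ofReal_ne_top hfind),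
        ENNReal.toReal_mul, ENNReal.toReal_mul,
        ENNReal.toReal_ofReal (by linarith [hηle k]), ENNReal.toReal_ofReal (hηpos k).le]
    set m : ℝ := (μseq k A.1).toReal
    set d : ℝ := (Measure.dirac (xstar k) A.1).toReal
    have heq : |m - ((μseq (k + 1)) A.1).toReal| = η * |m - d| := by
      rw [htoReal]
      have : m - ((1 - η) * m + η * d) = η * (m - d) := by ring
      rw [this, abs_mul, abs_of_nonneg (hηpos k).le]
    rw [heq]
    have h1 : |m - d| ≤ tvDist (μseq k) (Measure.dirac (xstar k)) :=
      le_tvDist (hprob k) inferInstance A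
    have h2 : tvDist (μseq k) (Measure.dirac (xstar k)) ≤ R :=
      hTVleR _ _ (hprob k) inferInstance
    exact mul_le_mul_of_nonneg_left (h1.trans h2) (hηpos k).le
  -- the key one-step inequality
  have hkey : ∀ k : ℕ, J (μseq (k + 1)) - Jstar ≤
      (1 - 2 / ((k : ℝ) + 2)) * (J (μseq k) - Jstar) +
        L / 2 * (2 / ((k : ℝ) + 2)) ^ 2 * R ^ 2 := by
    intro k
    set η : ℝ := 2 / ((k : ℝ) + 2) with hη
    have h1 := hsfi (μseq k) (μseq (k + 1)) (hprob k) (hprob (k + 1))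
    rw [hdec k] at h1
    have h2 := hgap k
    have h3 := htv k
    have htvnn : 0 ≤ tvDist (μseq k) (μseq (k + 1)) :=
      tvDist_nonneg' (hprob k) (hprob (k + 1))
    have h4 : tvDist (μseq k) (μseq (k + 1)) ^ 2 ≤ (η * R) ^ 2 := by
      apply pow_le_pow_left₀ htvnn h3
    have h5 : η * (h (μseq k) (xstar k) - ∫ x, h (μseq k) x ∂(μseq k)) ≤
        η * (Jstar - J (μseq k)) := mul_le_mul_of_nonneg_left h2 (hηpos k).le
    nlinarith [hηpos k, hL]
  -- the convergence bound by induction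
  have main : ∀ k : ℕ, 1 ≤ k → J (μseq k) - Jstar ≤ 2 * L * R ^ 2 / ((k : ℝ) + 2) := by
    intro k hk
    induction k with
    | zero => omega
    | succ n ih =>
      rcases Nat.lt_or_ge n 1 with hn | hn
      · -- n = 0 : base case
        interval_cases n
        have h1 := hkey 0
        norm_num at h1 ⊢
        nlinarith [sq_nonneg R, hL.le, hRnn]
      · have ihn := ih hn
        have h1 := hkey n
        set t : ℝ := (n : ℝ) + 2 with ht
        have ht2 : (2 : ℝ) ≤ t := by
          have : (0 : ℝ) ≤ (n : ℝ) := Nat.cast_nonneg n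
          rw [ht]; linarith
        have htpos : (0 : ℝ) < t := by linarith
        have hηnn : 0 ≤ 1 - 2 / t := by
          rw [sub_nonneg, div_le_one htpos]; linarith
        have h2 : (1 - 2 / t) * (J (μseq n) - Jstar) ≤
            (1 - 2 / t) * (2 * L * R ^ 2 / t) := mul_le_mul_of_nonneg_left ihn hηnn
        have hgoalcast : ((n + 1 : ℕ) : ℝ) + 2 = t + 1 := by push_cast [ht]; ring
        rw [hgoalcast]
        have hGnn : 0 ≤ 2 * L * R ^ 2 := by positivity
        have h3 : J (μseq (n + 1)) - Jstar ≤
            (1 - 2 / t) * (2 * L * R ^ 2 / t) + L / 2 * (2 / t) ^ 2 * R ^ 2 := by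
          linarith
        have htne : t ≠ 0 := ne_of_gt htpos
        have h4 : (1 - 2 / t) * (2 * L * R ^ 2 / t) + L / 2 * (2 / t) ^ 2 * R ^ 2 ≤
            2 * L * R ^ 2 / (t + 1) := by
          have hexp : (1 - 2 / t) * (2 * L * R ^ 2 / t) + L / 2 * (2 / t) ^ 2 * R ^ 2 =
              2 * L * R ^ 2 * (t - 1) / t ^ 2 := by
            field_simp
            ring
          rw [hexp, div_le_div_iff₀ (by positivity) (by positivity)]
          nlinarith [hGnn]
        linarith
  exact ⟨hRle, main⟩
end

section
/- Supermartingale property: let (Δ_k) be a nonnegative adapted sequence with E[Δ_{k+1} | F_k] ≤ (1 − 2/(k+2))Δ_k + 4LR²/(k+2)² for k ≥ 1, and fix δ ∈ (0,1). Then M_k := k^{1−δ}Δ_k + Σ_{j=k}^∞ 4LR²/(j+1)^{1+δ} defines a nonnegative supermartingale with respect to (F_k), i.e., E[M_{k+1} | F_k] ≤ M_k for all k ≥ 1. -/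
open MeasureTheory Filter Topology

/-- Supermartingale property underlying the a.s. convergence rate of sFW: if the
nonnegative adapted sequence `Δ` satisfies
`E[Δ_{k+1} | F_k] ≤ (1 - 2/(k+2))Δ_k + 4LR²/(k+2)²` for `k ≥ 1`, then
`M_k = k^{1-δ}Δ_k + Σ_{j≥k} 4LR²/(j+1)^{1+δ}` is a nonnegative supermartingale. -/
theorem stmt19 {Θ : Type*} {m0 : MeasurableSpace Θ}
    (Pr : Measure Θ) [IsProbabilityMeasure Pr]
    (F : Filtration ℕ m0) (Δ : ℕ → Θ → ℝ)
    (hadapt : Adapted F Δ)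
    (hint : ∀ k, Integrable (Δ k) Pr)
    (hnonneg : ∀ k ω, 0 ≤ Δ k ω)
    (L R δ : ℝ) (hL : 0 < L) (hR : 0 < R) (hδ : δ ∈ Set.Ioo (0:ℝ) 1)
    (hrec : ∀ k : ℕ, 1 ≤ k →
      Pr[Δ (k + 1)|F k] ≤ᵐ[Pr] fun ω =>
        (1 - 2 / ((k : ℝ) + 2)) * Δ k ω + 4 * L * R ^ 2 / ((k : ℝ) + 2) ^ 2) :
    (∀ k : ℕ, ∀ ω : Θ, 0 ≤ (k : ℝ) ^ ((1:ℝ) - δ) * Δ k ω +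
        ∑' j : ℕ, 4 * L * R ^ 2 / (((k + j : ℕ) : ℝ) + 1) ^ ((1:ℝ) + δ)) ∧
    (∀ k : ℕ, 1 ≤ k →
      Pr[fun ω => ((k + 1 : ℕ) : ℝ) ^ ((1:ℝ) - δ) * Δ (k + 1) ω +
          ∑' j : ℕ, 4 * L * R ^ 2 / (((k + 1 + j : ℕ) : ℝ) + 1) ^ ((1:ℝ) + δ)|F k]
        ≤ᵐ[Pr] fun ω => (k : ℝ) ^ ((1:ℝ) - δ) * Δ k ω +
          ∑' j : ℕ, 4 * L * R ^ 2 / (((k + j : ℕ) : ℝ) + 1) ^ ((1:ℝ) + δ)) := by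
  obtain ⟨hδ0, hδ1⟩ := hδ
  set f : ℕ → ℝ := fun n => 4 * L * R ^ 2 / ((n : ℝ) + 1) ^ ((1:ℝ) + δ) with hf
  have hfnn : ∀ n, 0 ≤ f n := fun n =>
    div_nonneg (by positivity) (Real.rpow_nonneg (by positivity) _)
  have hfs : Summable f := by
    have hbase : Summable (fun n : ℕ => 4 * L * R ^ 2 * ((1:ℝ) / (n : ℝ) ^ ((1:ℝ)+δ))) :=
      (Real.summable_one_div_nat_rpow.2 (by linarith)).mul_left _
    have h2 := (summable_nat_add_iff 1).2 hbase
    apply h2.congr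
    intro n
    push_cast
    rw [mul_one_div]
  have htail : ∀ k : ℕ, Summable fun j => f (k + j) := by
    intro k
    have := (summable_nat_add_iff k).2 hfs
    exact this.congr fun n => by rw [add_comm]
  have hshift : ∀ k : ℕ, ∑' j, f (k + j) = f k + ∑' j, f (k + 1 + j) := by
    intro k
    rw [Summable.tsum_eq_zero_add (htail k)]
    congr 1
    exact tsum_congr fun j => by rw [show k + (j + 1) = k + 1 + j by omega]
  constructor
  · intro k ω
    exact add_nonneg (mul_nonneg (Real.rpow_nonneg (Nat.cast_nonneg k) _) (hnonneg k ω))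
      (tsum_nonneg fun j => hfnn _)
  · intro k hk
    set c : ℝ := ((k + 1 : ℕ) : ℝ) ^ ((1:ℝ) - δ) with hc
    set C : ℝ := ∑' j : ℕ, f (k + 1 + j) with hC
    have hcnn : 0 ≤ c := Real.rpow_nonneg (Nat.cast_nonneg _) _
    have key : Pr[fun ω => c * Δ (k + 1) ω + C|F k] =ᵐ[Pr]
        fun ω => c * (Pr[Δ (k + 1)|F k]) ω + C := by
      have heq : (fun ω => c * Δ (k + 1) ω + C) = (c • Δ (k + 1)) + (fun _ => C) := rfl
      rw [heq]
      calc Pr[(c • Δ (k + 1)) + (fun _ => C)|F k]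
          =ᵐ[Pr] Pr[c • Δ (k + 1)|F k] + Pr[(fun _ => C)|F k] :=
            condExp_add ((hint (k + 1)).smul c) (integrable_const C) (F k)
        _ =ᵐ[Pr] fun ω => c * (Pr[Δ (k + 1)|F k]) ω + C := by
            filter_upwards [condExp_smul (𝕜 := ℝ) c (Δ (k + 1)) (m := F k)] with ω hω
            simp only [Pi.add_apply]
            rw [condExp_const (F.le k) C, hω]
            simp [smul_eq_mul]
    filter_upwards [key, hrec k hk] with ω h1 h2
    rw [h1]
    have hx : (1:ℝ) ≤ (k : ℝ) := by exact_mod_cast hk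
    set x : ℝ := (k : ℝ) with hxdef
    have hx0 : 0 < x := by linarith
    -- arithmetic inequalities
    have hA : c * (1 - 2 / (x + 2)) ≤ x ^ ((1:ℝ) - δ) := by
      have hceq : c = x ^ ((1:ℝ) - δ) * ((x + 1) / x) ^ ((1:ℝ) - δ) := by
        rw [hc, ← Real.mul_rpow (le_of_lt hx0) (by positivity)]
        push_cast
        rw [mul_div_cancel₀ _ (ne_of_gt hx0)]
      have hb1 : (1:ℝ) ≤ (x + 1) / x := by
        rw [le_div_iff₀ hx0]; linarith
      have hr : ((x + 1) / x) ^ ((1:ℝ) - δ) ≤ (x + 1) / x := by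
        calc ((x + 1) / x) ^ ((1:ℝ) - δ) ≤ ((x + 1) / x) ^ (1:ℝ) :=
              Real.rpow_le_rpow_of_exponent_le hb1 (by linarith)
          _ = (x + 1) / x := Real.rpow_one _
      have h12 : (1:ℝ) - 2 / (x + 2) = x / (x + 2) := by
        field_simp
        ring
      rw [h12, hceq]
      calc x ^ ((1:ℝ) - δ) * ((x + 1) / x) ^ ((1:ℝ) - δ) * (x / (x + 2))
          ≤ x ^ ((1:ℝ) - δ) * ((x + 1) / x) * (x / (x + 2)) := by
            apply mul_le_mul_of_nonneg_right _ (by positivity)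
            exact mul_le_mul_of_nonneg_left hr (Real.rpow_nonneg (le_of_lt hx0) _)
        _ = x ^ ((1:ℝ) - δ) * ((x + 1) / (x + 2)) := by
            field_simp
        _ ≤ x ^ ((1:ℝ) - δ) * 1 := by
            apply mul_le_mul_of_nonneg_left _ (Real.rpow_nonneg (le_of_lt hx0) _)
            rw [div_le_one (by linarith)]; linarith
        _ = x ^ ((1:ℝ) - δ) := mul_one _
    have hB : c * (4 * L * R ^ 2 / (x + 2) ^ 2) ≤ f k := by
      have hfk : f k = 4 * L * R ^ 2 / (x + 1) ^ ((1:ℝ) + δ) := rfl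
      rw [hfk, hc]
      push_cast
      rw [mul_div_assoc', div_le_div_iff₀ (by positivity)
        (Real.rpow_pos_of_pos (by linarith) _)]
      calc (x + 1) ^ ((1:ℝ) - δ) * (4 * L * R ^ 2) * (x + 1) ^ ((1:ℝ) + δ)
          = 4 * L * R ^ 2 * ((x + 1) ^ ((1:ℝ) - δ) * (x + 1) ^ ((1:ℝ) + δ)) := by ring
        _ = 4 * L * R ^ 2 * (x + 1) ^ 2 := by
            rw [← Real.rpow_add (by linarith)]; norm_num
        _ ≤ 4 * L * R ^ 2 * (x + 2) ^ 2 := by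
            apply mul_le_mul_of_nonneg_left _ (by positivity)
            apply pow_le_pow_left₀ (by linarith) (by linarith)
    calc c * (Pr[Δ (k + 1)|F k]) ω + C
        ≤ c * ((1 - 2 / (x + 2)) * Δ k ω + 4 * L * R ^ 2 / (x + 2) ^ 2) + C :=
          add_le_add_left (mul_le_mul_of_nonneg_left h2 hcnn) C
      _ = c * (1 - 2 / (x + 2)) * Δ k ω + c * (4 * L * R ^ 2 / (x + 2) ^ 2) + C := by ring
      _ ≤ x ^ ((1:ℝ) - δ) * Δ k ω + f k + C := by
          have h3 := mul_le_mul_of_nonneg_right hA (hnonneg k ω)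
          linarith [hB]
      _ = x ^ ((1:ℝ) - δ) * Δ k ω + ∑' j, f (k + j) := by
          rw [hshift k]; ring
end
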